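/- Let N be a unital C*-algebra and let r be a positive integer such that the set Lg_r(N) = {(x₁, …, x_r) ∈ Nʳ : there exist y₁, …, y_r ∈ N with y₁x₁ + ⋯ + y_r x_r = 1} is dense in Nʳ. Let A be a separable C*-subalgebra of N containing the unit of N. Then there exists a separable C*-subalgebra B of N with A ⊆ B ⊆ N and 1 ∈ B such that the set {(x₁, …, x_r) ∈ Bʳ : there exist y₁, …, y_r ∈ B with y₁x₁ + ⋯ + y_r x_r = 1} is dense in Bʳ. -/
import Mathlib


/-- `Lg r D` is the set of `r`-tuples of elements of a unital ring `D` which generate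
`D` as a left ideal: the tuples `(x₁, …, x_r)` for which there are `y₁, …, y_r` with
`y₁ x₁ + ⋯ + y_r x_r = 1`.  Density of this set in `Dʳ` is Rieffel's characterization
of topological stable rank at most `r`. -/
def Lg (r : ℕ) (D : Type*) [Ring D] : Set (Fin r → D) :=
  {x | ∃ y : Fin r → D, ∑ i, y i * x i = 1}

lemma countable_submonoid_closure {M : Type*} [Monoid M] {s : Set M} (hs : s.Countable) :
    (Submonoid.closure s : Set M).Countable := by
  rw [Submonoid.closure_eq_image_prod]
  apply Set.Countable.image
  have := hs.to_subtype
  have hsub : {l : List M | ∀ x ∈ l, x ∈ s} ⊆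
      Set.range (fun l : List s => l.map Subtype.val) := by
    intro l hl
    refine ⟨l.attach.map (fun x => ⟨x.1, hl x.1 x.2⟩), ?_⟩
    simp [List.map_map, Function.comp]
  exact (Set.countable_range _).mono hsub

lemma isSeparable_adjoin {N : Type*} [CStarAlgebra N] {s : Set N} (hs : s.Countable) :
    TopologicalSpace.IsSeparable (StarAlgebra.adjoin ℂ s : Set N) := by
  have h1 := congrArg (SetLike.coe) (StarAlgebra.adjoin_eq_span (R := ℂ) s)
  have h2 : (StarAlgebra.adjoin ℂ s : Set N) =
      (Submodule.span ℂ ((Submonoid.closure (s ∪ star s) : Submonoid N) : Set N) : Set N) := h1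
  rw [h2]
  have hstar : (star s : Set N).Countable := by
    rw [← Set.star_preimage]
    exact hs.preimage star_injective
  exact ((countable_submonoid_closure (hs.union hstar)).isSeparable).span


/-- If `N` is a unital C*-algebra with `Lg_r(N)` dense in `Nʳ`, and `A ⊆ N` is a
separable C*-subalgebra containing the unit, then there is a separable C*-subalgebra
`B` with `A ⊆ B ⊆ N`, `1 ∈ B`, and `Lg_r(B)` dense in `Bʳ`. -/
theorem exists_separable_intermediate_subalgebra_lg_dense
    (N : Type*) [CStarAlgebra N] (r : ℕ) (hr : 0 < r)
    (hN : Dense (Lg r N))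
    (A : StarSubalgebra ℂ N) (hA_closed : IsClosed (A : Set N))
    (hA_sep : TopologicalSpace.SeparableSpace A) :
    ∃ B : StarSubalgebra ℂ N, IsClosed (B : Set N) ∧
      TopologicalSpace.SeparableSpace B ∧ A ≤ B ∧ (1 : N) ∈ B ∧
      Dense (Lg r B) := by
  classical
  -- approximation from density of Lg r N
  have key : ∀ (t : Fin r → N) (k : ℕ), ∃ x y : Fin r → N,
      (∑ i, y i * x i = 1) ∧ ∀ i, ‖x i - t i‖ < ((k : ℝ) + 1)⁻¹ := by
    intro t k
    have hk : (0 : ℝ) < ((k : ℝ) + 1)⁻¹ := by positivity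
    obtain ⟨x, hx1, hx2⟩ := Metric.dense_iff.mp hN t _ hk
    obtain ⟨y, hy⟩ := hx2
    refine ⟨x, y, hy, fun i => ?_⟩
    rw [← dist_eq_norm]
    exact (dist_pi_lt_iff hk).mp (by simpa [dist_comm] using hx1) i
  choose xF yF hxy hclose using key
  -- countable dense-ish set for each countable set
  have hsep : ∀ s : {s : Set N // s.Countable}, ∃ D : Set N, D.Countable ∧
      (StarAlgebra.adjoin ℂ (s : Set N) : Set N) ⊆ closure D :=
    fun s => isSeparable_adjoin s.2
  choose Df hDc hDd using hsep
  -- the approximation elements added for a set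
  let Approx : Set N → Set N := fun S =>
    ⋃ t ∈ {t : Fin r → N | ∀ i, t i ∈ S}, ⋃ k : ℕ,
      (Set.range (xF t k) ∪ Set.range (yF t k))
  have hApproxC : ∀ S : Set N, S.Countable → (Approx S).Countable := by
    intro S hS
    apply Set.Countable.biUnion
    · exact Set.countable_pi (fun _ => hS)
    · intro t _
      exact Set.countable_iUnion fun k =>
        (Set.countable_range _).union (Set.countable_range _)
  -- base: countable dense subset of A
  obtain ⟨s0, hs0c, hs0d⟩ := TopologicalSpace.exists_countable_dense A
  let DA : Set N := Subtype.val '' s0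
  have hDAc : DA.Countable := hs0c.image _
  have hADA : (A : Set N) ⊆ closure DA := by
    intro a ha
    have : (⟨a, ha⟩ : A) ∈ closure s0 := hs0d _
    have h2 := image_closure_subset_closure_image (f := (Subtype.val : A → N))
      continuous_subtype_val (s := s0)
    exact h2 ⟨⟨a, ha⟩, this, rfl⟩
  -- iterate
  let step : {s : Set N // s.Countable} → {s : Set N // s.Countable} := fun s =>
    ⟨s ∪ Df s ∪ Approx s, (s.2.union (hDc s)).union (hApproxC _ s.2)⟩
  let Sq : ℕ → {s : Set N // s.Countable} := fun n => step^[n] ⟨DA, hDAc⟩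
  have hSq_succ : ∀ n, Sq (n + 1) = step (Sq n) := fun n =>
    Function.iterate_succ_apply' step n _
  have hmono : ∀ n, (Sq n : Set N) ⊆ (Sq (n + 1) : Set N) := by
    intro n
    rw [hSq_succ n]
    exact fun x hx => Or.inl (Or.inl hx)
  have hmono' : ∀ m n, m ≤ n → (Sq m : Set N) ⊆ (Sq n : Set N) := by
    intro m n hmn
    induction hmn with
    | refl => exact le_rfl
    | step h ih => exact ih.trans (hmono _)
  set U : Set N := ⋃ n, (Sq n : Set N) with hU
  have hUc : U.Countable := Set.countable_iUnion fun n => (Sq n).2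
  set B : StarSubalgebra ℂ N := (StarAlgebra.adjoin ℂ U).topologicalClosure with hB
  have hBset : (B : Set N) = closure (StarAlgebra.adjoin ℂ U : Set N) := rfl
  have hUB : ∀ n, (Sq n : Set N) ⊆ (B : Set N) := by
    intro n x hx
    rw [hBset]
    exact subset_closure (StarAlgebra.subset_adjoin ℂ U (Set.mem_iUnion.2 ⟨n, hx⟩))
  -- directedness
  have hdir : ∀ z ∈ StarAlgebra.adjoin ℂ U, ∃ m, z ∈ StarAlgebra.adjoin ℂ (Sq m : Set N) := by
    intro z hz
    induction hz using StarAlgebra.adjoin_induction with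
    | mem x hx =>
      obtain ⟨m, hm⟩ := Set.mem_iUnion.mp hx
      exact ⟨m, StarAlgebra.subset_adjoin ℂ _ hm⟩
    | algebraMap c => exact ⟨0, algebraMap_mem _ c⟩
    | add x y hx hy ihx ihy =>
      obtain ⟨m1, h1⟩ := ihx
      obtain ⟨m2, h2⟩ := ihy
      refine ⟨max m1 m2, add_mem ?_ ?_⟩
      · exact StarAlgebra.adjoin_le
          (fun a ha => StarAlgebra.subset_adjoin ℂ _ (hmono' m1 _ (le_max_left _ _) ha)) h1
      · exact StarAlgebra.adjoin_le
          (fun a ha => StarAlgebra.subset_adjoin ℂ _ (hmono' m2 _ (le_max_right _ _) ha)) h2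
    | mul x y hx hy ihx ihy =>
      obtain ⟨m1, h1⟩ := ihx
      obtain ⟨m2, h2⟩ := ihy
      refine ⟨max m1 m2, mul_mem ?_ ?_⟩
      · exact StarAlgebra.adjoin_le
          (fun a ha => StarAlgebra.subset_adjoin ℂ _ (hmono' m1 _ (le_max_left _ _) ha)) h1
      · exact StarAlgebra.adjoin_le
          (fun a ha => StarAlgebra.subset_adjoin ℂ _ (hmono' m2 _ (le_max_right _ _) ha)) h2
    | star x hx ihx =>
      obtain ⟨m, hm⟩ := ihx
      exact ⟨m, star_mem hm⟩
  refine ⟨B, ?_, ?_, ?_, ?_, ?_⟩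
  · exact isClosed_closure
  · have : TopologicalSpace.IsSeparable (B : Set N) := by
      rw [hBset]
      exact (isSeparable_adjoin hUc).closure
    exact this.separableSpace
  · intro a ha
    have h0 : DA ⊆ (Sq 0 : Set N) := le_rfl
    have : (A : Set N) ⊆ closure (Sq 0 : Set N) := hADA.trans (closure_mono h0)
    have hcl : closure ((Sq 0 : Set N)) ⊆ (B : Set N) := by
      rw [hBset]
      exact closure_mono fun x hx =>
        StarAlgebra.subset_adjoin ℂ U (Set.mem_iUnion.2 ⟨0, hx⟩)
    exact hcl (this ha)
  · exact one_mem B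
  · -- density of Lg r B
    rw [Metric.dense_iff]
    intro b ε hε
    -- approximate each coordinate
    have hb : ∀ i, ∃ z ∈ StarAlgebra.adjoin ℂ U, ‖z - (b i : N)‖ < ε / 4 := by
      intro i
      have : (b i : N) ∈ closure (StarAlgebra.adjoin ℂ U : Set N) := (b i).2
      obtain ⟨z, hz1, hz2⟩ := Metric.mem_closure_iff.mp this (ε / 4) (by positivity)
      exact ⟨z, hz1, by rw [← dist_eq_norm, dist_comm]; exact hz2⟩
    choose z hz hzb using hb
    have hm : ∀ i, ∃ m, z i ∈ StarAlgebra.adjoin ℂ (Sq m : Set N) := fun i => hdir _ (hz i)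
    choose mf hmf using hm
    obtain ⟨M, hM⟩ : ∃ M, ∀ i, mf i ≤ M := Finite.exists_le mf
    -- z i ∈ adjoin (Sq M), hence in closure (Df (Sq M)); approximate by t i ∈ Df (Sq M)
    have hzM : ∀ i, z i ∈ closure (Df (Sq M)) := by
      intro i
      apply hDd (Sq M)
      exact StarAlgebra.adjoin_le
        (fun a ha => StarAlgebra.subset_adjoin ℂ _ (hmono' (mf i) M (hM i) ha)) (hmf i)
    have ht : ∀ i, ∃ t ∈ Df (Sq M), ‖t - z i‖ < ε / 4 := by
      intro i
      obtain ⟨t, ht1, ht2⟩ := Metric.mem_closure_iff.mp (hzM i) (ε / 4) (by positivity)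
      exact ⟨t, ht1, by rw [← dist_eq_norm, dist_comm]; exact ht2⟩
    choose t htD htz using ht
    -- t i ∈ Sq (M+1)
    have htS : ∀ i, t i ∈ (Sq (M + 1) : Set N) := by
      intro i
      rw [hSq_succ M]
      exact Or.inl (Or.inr (htD i))
    -- pick k with (k+1)⁻¹ < ε/4
    obtain ⟨k, hk⟩ := exists_nat_gt (4 / ε)
    have hk' : ((k : ℝ) + 1)⁻¹ < ε / 4 := by
      rw [show ε / 4 = (4 / ε)⁻¹ by rw [inv_div]]
      exact inv_strictAnti₀ (by positivity) (hk.trans (lt_add_one _))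
    -- the approximants
    have hxB : ∀ i, xF t k i ∈ B := by
      intro i
      apply hUB (M + 2)
      rw [hSq_succ (M + 1)]
      refine Or.inr (Set.mem_biUnion htS ?_)
      exact Set.mem_iUnion.2 ⟨k, Or.inl ⟨i, rfl⟩⟩
    have hyB : ∀ i, yF t k i ∈ B := by
      intro i
      apply hUB (M + 2)
      rw [hSq_succ (M + 1)]
      refine Or.inr (Set.mem_biUnion htS ?_)
      exact Set.mem_iUnion.2 ⟨k, Or.inr ⟨i, rfl⟩⟩
    refine ⟨fun i => ⟨xF t k i, hxB i⟩, ?_, ?_⟩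
    · rw [Metric.mem_ball]
      rw [dist_pi_lt_iff hε]
      intro i
      rw [Subtype.dist_eq, dist_eq_norm]
      calc ‖xF t k i - (b i : N)‖
          ≤ ‖xF t k i - t i‖ + ‖t i - z i‖ + ‖z i - (b i : N)‖ := by
            have := norm_add₃_le (a := xF t k i - t i) (b := t i - z i) (c := z i - (b i : N))
            simpa using this
        _ < ε / 4 + ε / 4 + ε / 4 := by
            gcongr
            · exact (hclose t k i).trans hk'
            · exact htz i
            · exact hzb i
        _ < ε := by linarith
    · refine ⟨fun i => ⟨yF t k i, hyB i⟩, ?_⟩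
      apply Subtype.ext
      push_cast
      exact hxy t k
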